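/- arXiv:2203.02637 — 4 statements merged into one kernel-verified Lean document; each statement's English description precedes it below -/
import Mathlib

section
/- Let f : G → H be a surjective group homomorphism with kernel K contained in the center Z(G), and suppose H is perfect. Then G = K·[G,G], the commutator subgroup [G,G] is a perfect group, and [G,G] is the unique maximal perfect subgroup of G. -/
open scoped commutatorElement

private lemma aux_left {G : Type*} [Group G] (k x y : G)
    (hk : k ∈ Subgroup.center G) : ⁅k * x, y⁆ = ⁅x, y⁆ := by
  have h2 := Subgroup.mem_center_iff.mp ((Subgroup.center G).inv_mem hk)
  have e1 : ⁅k * x, y⁆ = k * (x * y * x⁻¹ * k⁻¹) * y⁻¹ := by group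
  rw [e1, show x * y * x⁻¹ * k⁻¹ = k⁻¹ * (x * y * x⁻¹) from h2 _]
  group

private lemma aux_right {G : Type*} [Group G] (k x y : G)
    (hk : k ∈ Subgroup.center G) : ⁅x, k * y⁆ = ⁅x, y⁆ := by
  have h1 := Subgroup.mem_center_iff.mp hk
  have h2 := Subgroup.mem_center_iff.mp ((Subgroup.center G).inv_mem hk)
  have e1 : ⁅x, k * y⁆ = (x * k) * (y * x⁻¹ * y⁻¹ * k⁻¹) := by group
  rw [e1, show y * x⁻¹ * y⁻¹ * k⁻¹ = k⁻¹ * (y * x⁻¹ * y⁻¹) from h2 _]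
  group

theorem stmt3 {G H : Type*} [Group G] [Group H] (f : G →* H)
    (hf : Function.Surjective f) (hker : f.ker ≤ Subgroup.center G)
    (hH : commutator H = ⊤) :
    (∀ g : G, ∃ k ∈ f.ker, ∃ x ∈ commutator G, g = k * x) ∧
    commutator ↥(commutator G) = ⊤ ∧
    (∀ P : Subgroup G, commutator ↥P = ⊤ → P ≤ commutator G) := by
  have hmap : (commutator G).map f = ⊤ := by
    rw [commutator, Subgroup.map_commutator, Subgroup.map_top_of_surjective f hf, ← commutator, hH]
  have part1 : ∀ g : G, ∃ k ∈ f.ker, ∃ x ∈ commutator G, g = k * x := by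
    intro g
    have : f g ∈ (commutator G).map f := by rw [hmap]; trivial
    obtain ⟨x, hx, hfx⟩ := this
    refine ⟨g * x⁻¹, ?_, x, hx, by group⟩
    rw [MonoidHom.mem_ker, map_mul, map_inv, hfx]
    group
  -- key: ⁅D, D⁆ = D where D = commutator G
  have key : ⁅commutator G, commutator G⁆ = commutator G := by
    refine le_antisymm (Subgroup.commutator_mono le_top le_top) ?_
    rw [commutator, Subgroup.commutator_le]
    intro g1 _ g2 _
    obtain ⟨k1, hk1, x1, hx1, rfl⟩ := part1 g1
    obtain ⟨k2, hk2, x2, hx2, rfl⟩ := part1 g2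
    have hc1 := Subgroup.mem_center_iff.mp (hker hk1)
    have hc2 := Subgroup.mem_center_iff.mp (hker hk2)
    have : ⁅k1 * x1, k2 * x2⁆ = ⁅x1, x2⁆ := by
      rw [aux_left _ _ _ (hker hk1), aux_right _ _ _ (hker hk2)]
    rw [this]
    exact Subgroup.commutator_mem_commutator hx1 hx2
  have top_map : ∀ (P : Subgroup G), (⊤ : Subgroup ↥P).map P.subtype = P := by
    intro P
    rw [← MonoidHom.range_eq_map, Subgroup.range_subtype]
  have subtype_map : ∀ (P : Subgroup G),
      (commutator ↥P).map P.subtype = ⁅P, P⁆ := by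
    intro P
    rw [commutator, Subgroup.map_commutator, top_map]
  have part2 : commutator ↥(commutator G) = ⊤ := by
    have h := subtype_map (commutator G)
    rw [key] at h
    exact Subgroup.map_injective (commutator G).subtype_injective
      (h.trans (top_map (commutator G)).symm)
  refine ⟨part1, part2, ?_⟩
  intro P hP
  have h := subtype_map P
  rw [hP] at h
  have : P ≤ ⁅P, P⁆ := by
    rw [← h]
    intro x hx
    exact ⟨⟨x, hx⟩, trivial, rfl⟩
  exact this.trans (Subgroup.commutator_mono le_top le_top)
end

section
/- Let G be a group with a normal subgroup N and a finite subgroup F = {e, x₁, …, xₙ} such that G = FN. Suppose N is abelian. Then [G,N], the subgroup generated by commutators of elements of G with elements of N, equals the product of subgroups [x₁,N]₁ ⋯ [xₙ,N]₁, where [xᵢ,N]₁ = {[xᵢ,n] : n ∈ N}; moreover [G,G] = [F,F]·[G,N]. -/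
open scoped Pointwise
open scoped commutatorElement

private lemma aux_conj_mem {G : Type*} [Group G] {N : Subgroup G} [hN : N.Normal]
    {n : G} (hn : n ∈ N) (x : G) : x⁻¹ * n * x ∈ N := by
  have := hN.conj_mem n hn x⁻¹
  rwa [inv_inv] at this

private lemma aux_mul_sup {G : Type*} [Group G] (A B : Subgroup G)
    (h : ∀ a ∈ A, ∀ b ∈ B, a * b = b * a) :
    ((A : Set G) * (B : Set G)) = ((A ⊔ B : Subgroup G) : Set G) := by
  apply Set.Subset.antisymm
  · rintro z hz
    obtain ⟨a, ha, b, hb, rfl⟩ := Set.mem_mul.mp hz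
    exact mul_mem (Subgroup.mem_sup_left ha) (Subgroup.mem_sup_right hb)
  · have hM : ∃ M : Subgroup G, (M : Set G) = (A : Set G) * (B : Set G) := by
      refine ⟨{ carrier := (A : Set G) * (B : Set G)
                one_mem' := Set.mem_mul.mpr ⟨1, one_mem A, 1, one_mem B, mul_one 1⟩
                mul_mem' := ?_
                inv_mem' := ?_ }, rfl⟩
      · rintro x y hx hy
        obtain ⟨a, ha, b, hb, rfl⟩ := Set.mem_mul.mp hx
        obtain ⟨a', ha', b', hb', rfl⟩ := Set.mem_mul.mp hy
        refine Set.mem_mul.mpr ⟨a * a', mul_mem ha ha', b * b', mul_mem hb hb', ?_⟩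
        have hc := h a' ha' b hb
        calc a * a' * (b * b') = a * (a' * b) * b' := by group
          _ = a * (b * a') * b' := by rw [hc]
          _ = a * b * (a' * b') := by group
      · rintro x hx
        obtain ⟨a, ha, b, hb, rfl⟩ := Set.mem_mul.mp hx
        refine Set.mem_mul.mpr ⟨a⁻¹, inv_mem ha, b⁻¹, inv_mem hb, ?_⟩
        have hc := h a⁻¹ (inv_mem ha) b⁻¹ (inv_mem hb)
        rw [hc, mul_inv_rev]
    obtain ⟨M, hM⟩ := hM
    have h1 : A ⊔ B ≤ M := by
      apply sup_le
      · intro a ha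
        show a ∈ (M : Set G)
        exact hM ▸ Set.mem_mul.mpr ⟨a, ha, 1, one_mem B, mul_one a⟩
      · intro b hb
        show b ∈ (M : Set G)
        exact hM ▸ Set.mem_mul.mpr ⟨1, one_mem A, b, hb, one_mul b⟩
    intro z hz
    exact hM ▸ h1 hz

private lemma aux_central_comm {Q : Type*} [Group Q] (a b c d : Q)
    (hb : ∀ y, b * y = y * b) (hd : ∀ y, d * y = y * d) :
    ⁅a * b, c * d⁆ = ⁅a, c⁆ := by
  rw [commutatorElement_def, commutatorElement_def]
  calc a * b * (c * d) * (a * b)⁻¹ * (c * d)⁻¹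
      = a * (b * (c * d)) * (b⁻¹ * (a⁻¹ * (d⁻¹ * c⁻¹))) := by group
    _ = a * ((c * d) * b) * (b⁻¹ * (a⁻¹ * (d⁻¹ * c⁻¹))) := by rw [hb (c * d)]
    _ = a * (c * ((d * a⁻¹) * (d⁻¹ * c⁻¹))) := by group
    _ = a * (c * ((a⁻¹ * d) * (d⁻¹ * c⁻¹))) := by rw [hd a⁻¹]
    _ = a * c * a⁻¹ * c⁻¹ := by group

private def Kgp {G : Type*} [Group G] (N : Subgroup G) [hN : N.Normal]
    (hNab : ∀ a ∈ N, ∀ b ∈ N, a * b = b * a) (x : G) : Subgroup G where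
  carrier := {c : G | ∃ n ∈ N, c = x⁻¹ * n⁻¹ * x * n}
  one_mem' := ⟨1, one_mem N, by group⟩
  mul_mem' := by
    rintro c c' ⟨n, hn, rfl⟩ ⟨m, hm, rfl⟩
    refine ⟨m * n, mul_mem hm hn, ?_⟩
    have hconj : x⁻¹ * m⁻¹ * x ∈ N := by
      exact aux_conj_mem (inv_mem hm) x
    have hswap : n * (x⁻¹ * m⁻¹ * x) = (x⁻¹ * m⁻¹ * x) * n := hNab n hn _ hconj
    have hnm : n * m = m * n := hNab n hn m hm
    calc x⁻¹ * n⁻¹ * x * n * (x⁻¹ * m⁻¹ * x * m)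
        = (x⁻¹ * n⁻¹ * x) * ((n * (x⁻¹ * m⁻¹ * x)) * m) := by group
      _ = (x⁻¹ * n⁻¹ * x) * (((x⁻¹ * m⁻¹ * x) * n) * m) := by rw [hswap]
      _ = x⁻¹ * (m * n)⁻¹ * x * (n * m) := by group
      _ = x⁻¹ * (m * n)⁻¹ * x * (m * n) := by rw [hnm]
  inv_mem' := by
    rintro c ⟨n, hn, rfl⟩
    refine ⟨n⁻¹, inv_mem hn, ?_⟩
    have hconj : x⁻¹ * n * x ∈ N := by
      exact aux_conj_mem hn x
    have hswap : n⁻¹ * (x⁻¹ * n * x) = (x⁻¹ * n * x) * n⁻¹ :=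
      hNab n⁻¹ (inv_mem hn) _ hconj
    calc (x⁻¹ * n⁻¹ * x * n)⁻¹ = n⁻¹ * (x⁻¹ * n * x) := by group
      _ = (x⁻¹ * n * x) * n⁻¹ := by rw [hswap]
      _ = x⁻¹ * (n⁻¹)⁻¹ * x * n⁻¹ := by group

private def Ksup {G : Type*} [Group G] (K : G → Subgroup G) (l : List G) : Subgroup G :=
  (l.map K).foldr (· ⊔ ·) ⊥

private lemma Ksup_le {G : Type*} [Group G] {K : G → Subgroup G} {l : List G}
    {M : Subgroup G} (h : ∀ x ∈ l, K x ≤ M) : Ksup K l ≤ M := by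
  induction l with
  | nil => exact bot_le
  | cons x l ih =>
      exact sup_le (h x (List.mem_cons_self))
        (ih fun y hy => h y (List.mem_cons_of_mem x hy))

private lemma le_Ksup {G : Type*} [Group G] {K : G → Subgroup G} {l : List G}
    {x : G} (hx : x ∈ l) : K x ≤ Ksup K l := by
  induction l with
  | nil => exact absurd hx List.not_mem_nil
  | cons y l ih =>
      rcases List.mem_cons.mp hx with h | h
      · subst h; exact le_sup_left
      · exact le_trans (ih h) le_sup_right

private lemma aux_prod_eq {G : Type*} [Group G] (N : Subgroup G) [hN : N.Normal]
    (hNab : ∀ a ∈ N, ∀ b ∈ N, a * b = b * a)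
    (hle : ∀ x : G, Kgp N hNab x ≤ N) (l : List G) :
    (l.map (fun x => ((Kgp N hNab x : Subgroup G) : Set G))).prod
      = ((Ksup (Kgp N hNab) l : Subgroup G) : Set G) := by
  induction l with
  | nil =>
      show (1 : Set G) = ((⊥ : Subgroup G) : Set G)
      rw [Subgroup.coe_bot]
      rfl
  | cons x l ih =>
      have hsup : Ksup (Kgp N hNab) (x :: l) = Kgp N hNab x ⊔ Ksup (Kgp N hNab) l := rfl
      rw [List.map_cons, List.prod_cons, ih, hsup]
      exact aux_mul_sup _ _ fun a ha b hb =>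
        hNab a (hle x ha) b (Ksup_le (fun y _ => hle y) hb)

theorem stmt8 {G : Type*} [Group G] (N F : Subgroup G) [N.Normal]
    (xs : List G)
    (hF : (F : Set G) = insert (1 : G) {x : G | x ∈ xs})
    (hFN : ∀ g : G, ∃ f ∈ F, ∃ n ∈ N, g = f * n)
    (hNab : ∀ a ∈ N, ∀ b ∈ N, a * b = b * a) :
    ((Subgroup.closure {c : G | ∃ g : G, ∃ n ∈ N, c = g⁻¹ * n⁻¹ * g * n} : Subgroup G) :
        Set G) =
      (xs.map (fun x => ({c : G | ∃ n ∈ N, c = x⁻¹ * n⁻¹ * x * n} : Set G))).prod ∧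
    (commutator G : Set G) =
      ((Subgroup.closure {c : G | ∃ a ∈ F, ∃ b ∈ F, c = a⁻¹ * b⁻¹ * a * b} : Subgroup G) :
          Set G) *
      ((Subgroup.closure {c : G | ∃ g : G, ∃ n ∈ N, c = g⁻¹ * n⁻¹ * g * n} : Subgroup G) :
          Set G) := by
  have hle : ∀ x : G, Kgp N hNab x ≤ N := by
    rintro x c ⟨n, hn, rfl⟩
    have hconj : x⁻¹ * n⁻¹ * x ∈ N := by
      exact aux_conj_mem (inv_mem hn) x
    exact mul_mem hconj hn
  constructor
  · -- part 1
    have hC1 : Subgroup.closure {c : G | ∃ g : G, ∃ n ∈ N, c = g⁻¹ * n⁻¹ * g * n}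
        = Ksup (Kgp N hNab) xs := by
      apply le_antisymm
      · rw [Subgroup.closure_le]
        rintro c ⟨g, n, hn, rfl⟩
        obtain ⟨f, hf, m, hm, rfl⟩ := hFN g
        have hbN : f⁻¹ * n⁻¹ * f ∈ N := by
          exact aux_conj_mem (inv_mem hn) f
        have hswap : m⁻¹ * (f⁻¹ * n⁻¹ * f) = (f⁻¹ * n⁻¹ * f) * m⁻¹ :=
          hNab m⁻¹ (inv_mem hm) _ hbN
        have key : (f * m)⁻¹ * n⁻¹ * (f * m) * n = f⁻¹ * n⁻¹ * f * n := by
          calc (f * m)⁻¹ * n⁻¹ * (f * m) * n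
              = (m⁻¹ * (f⁻¹ * n⁻¹ * f)) * (m * n) := by group
            _ = ((f⁻¹ * n⁻¹ * f) * m⁻¹) * (m * n) := by rw [hswap]
            _ = f⁻¹ * n⁻¹ * f * n := by group
        show (f * m)⁻¹ * n⁻¹ * (f * m) * n ∈ Ksup (Kgp N hNab) xs
        rw [key]
        have hfF : f ∈ (F : Set G) := hf
        rw [hF] at hfF
        rcases Set.mem_insert_iff.mp hfF with h1 | hx
        · subst h1
          have : (1 : G)⁻¹ * n⁻¹ * 1 * n = 1 := by group
          rw [this]
          exact one_mem _
        · exact le_Ksup hx ⟨n, hn, rfl⟩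
      · refine Ksup_le fun x _ => ?_
        rintro c ⟨n, hn, rfl⟩
        exact Subgroup.subset_closure ⟨x, n, hn, rfl⟩
    have hfun : (fun x => ({c : G | ∃ n ∈ N, c = x⁻¹ * n⁻¹ * x * n} : Set G))
        = fun x => ((Kgp N hNab x : Subgroup G) : Set G) := rfl
    rw [hC1, hfun]
    exact (aux_prod_eq N hNab hle xs).symm
  · -- part 2
    have hC2 : Subgroup.closure {c : G | ∃ g : G, ∃ n ∈ N, c = g⁻¹ * n⁻¹ * g * n}
        = ⁅(⊤ : Subgroup G), N⁆ := by
      rw [Subgroup.commutator_def]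
      congr 1
      ext c
      constructor
      · rintro ⟨g, n, hn, rfl⟩
        exact ⟨g⁻¹, Subgroup.mem_top _, n⁻¹, inv_mem hn, by
          rw [commutatorElement_def]; group⟩
      · rintro ⟨p, -, q, hq, rfl⟩
        exact ⟨p⁻¹, q⁻¹, inv_mem hq, by rw [commutatorElement_def]; group⟩
    have hD : Subgroup.closure {c : G | ∃ a ∈ F, ∃ b ∈ F, c = a⁻¹ * b⁻¹ * a * b}
        = ⁅F, F⁆ := by
      rw [Subgroup.commutator_def]
      congr 1
      ext c
      constructor
      · rintro ⟨a, ha, b, hb, rfl⟩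
        exact ⟨a⁻¹, inv_mem ha, b⁻¹, inv_mem hb, by rw [commutatorElement_def]; group⟩
      · rintro ⟨p, hp, q, hq, rfl⟩
        exact ⟨p⁻¹, inv_mem hp, q⁻¹, inv_mem hq, by rw [commutatorElement_def]; group⟩
    have hsup : commutator G = ⁅F, F⁆ ⊔ ⁅(⊤ : Subgroup G), N⁆ := by
      rw [commutator_def]
      apply le_antisymm
      · rw [Subgroup.commutator_le]
        intro g _ h _
        obtain ⟨f, hf, m, hm, rfl⟩ := hFN g
        obtain ⟨f', hf', m', hm', rfl⟩ := hFN h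
        set π := QuotientGroup.mk' ⁅(⊤ : Subgroup G), N⁆ with hπ
        have hcent : ∀ n ∈ N, ∀ q : G ⧸ ⁅(⊤ : Subgroup G), N⁆, π n * q = q * π n := by
          intro n hn q
          obtain ⟨y, rfl⟩ := QuotientGroup.mk'_surjective _ q
          have hmem : ⁅y, n⁆ ∈ ⁅(⊤ : Subgroup G), N⁆ :=
            Subgroup.commutator_mem_commutator (Subgroup.mem_top y) hn
          have h1 : π ⁅y, n⁆ = 1 := by
            rw [← QuotientGroup.ker_mk' ⁅(⊤ : Subgroup G), N⁆] at hmem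
            exact hmem
          rw [map_commutatorElement] at h1
          exact (commutatorElement_eq_one_iff_mul_comm.mp h1).symm
        have hq : π ⁅f * m, f' * m'⁆ = π ⁅f, f'⁆ := by
          rw [map_commutatorElement, map_commutatorElement, map_mul, map_mul]
          exact aux_central_comm _ _ _ _ (hcent m hm) (hcent m' hm')
        have hker : ⁅f * m, f' * m'⁆ * ⁅f, f'⁆⁻¹ ∈ ⁅(⊤ : Subgroup G), N⁆ := by
          rw [← QuotientGroup.ker_mk' ⁅(⊤ : Subgroup G), N⁆]
          show ⁅f * m, f' * m'⁆ * ⁅f, f'⁆⁻¹ ∈ π.ker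
          rw [MonoidHom.mem_ker, map_mul, map_inv, hq]
          group
        have hrw : ⁅f * m, f' * m'⁆ = (⁅f * m, f' * m'⁆ * ⁅f, f'⁆⁻¹) * ⁅f, f'⁆ := by
          group
        rw [hrw]
        exact mul_mem (Subgroup.mem_sup_right hker)
          (Subgroup.mem_sup_left (Subgroup.commutator_mem_commutator hf hf'))
      · exact sup_le (Subgroup.commutator_mono le_top le_top)
          (Subgroup.commutator_mono le_top le_top)
    rw [hD, hC2, hsup]
    exact Subgroup.mul_normal ⁅F, F⁆ ⁅(⊤ : Subgroup G), N⁆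
end

section
/- Let G be a group with a normal abelian subgroup N such that N is uniquely divisible (divisible and torsion-free) and the quotient G/N is finite. Then N has a complement in G: there exists a subgroup F of G with F ∩ N = {e} and G = NF (so G is a semidirect product of N and F). -/
theorem stmt9 {G : Type*} [Group G] (N : Subgroup G) [N.Normal]
    (hab : ∀ a ∈ N, ∀ b ∈ N, a * b = b * a)
    (hdiv : ∀ n : ℕ, 0 < n → Function.Bijective (fun x : N => x ^ n))
    (hfin : Finite (G ⧸ N)) :
    ∃ F : Subgroup G, F ⊓ N = ⊥ ∧ ∀ g : G, ∃ n ∈ N, ∃ f ∈ F, g = n * f := by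
  classical
  obtain ⟨_⟩ := nonempty_fintype (G ⧸ N)
  letI : CommGroup N :=
    { (inferInstance : Group N) with
      mul_comm := fun a b => Subtype.ext (hab a a.2 b b.2) }
  set m := Fintype.card (G ⧸ N) with hm_def
  have hm : 0 < m := Fintype.card_pos
  -- m-th root function on N
  let E : N ≃ N := Equiv.ofBijective _ (hdiv m hm)
  let ρ : N → N := E.symm
  have hE : ∀ x : N, E x = x ^ m := fun x => rfl
  have hρ_eq : ∀ x y : N, y ^ m = x → ρ x = y := by
    intro x y h
    apply E.injective
    rw [E.apply_symm_apply, hE, h]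
  have hρ_pow : ∀ x : N, ρ (x ^ m) = x := fun x => hρ_eq _ _ rfl
  have hρ_mul : ∀ x y : N, ρ (x * y) = ρ x * ρ y := by
    intro x y
    refine hρ_eq _ _ ?_
    rw [mul_pow]
    have h1 : (ρ x) ^ m = x := E.apply_symm_apply x
    have h2 : (ρ y) ^ m = y := E.apply_symm_apply y
    rw [h1, h2]
  -- conjugation action
  let σ : G → N ≃* N := fun g => MulAut.conjNormal g
  have hσ : ∀ (g : G) (a : N), ((σ g a : N) : G) = g * a * g⁻¹ := by
    intro g a; exact MulAut.conjNormal_apply g a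
  have hρ_σ : ∀ (g : G) (x : N), ρ (σ g x) = σ g (ρ x) := by
    intro g x
    refine hρ_eq _ _ ?_
    rw [← map_pow, show (ρ x) ^ m = x from E.apply_symm_apply x]
  -- section
  let t : (G ⧸ N) → G := Quotient.out
  have ht : ∀ q : G ⧸ N, (t q : G ⧸ N) = q := fun q => QuotientGroup.out_eq' q
  -- cocycle
  have hmemf : ∀ q r : G ⧸ N, t q * t r * (t (q * r))⁻¹ ∈ N := by
    intro q r
    have h1 : ((t (q * r) : G) : G ⧸ N) = ((t q * t r : G) : G ⧸ N) := by
      rw [ht]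
      show q * r = QuotientGroup.mk _
      rw [QuotientGroup.mk_mul, ht, ht]
    have h2 : (t (q * r))⁻¹ * (t q * t r) ∈ N := QuotientGroup.eq.mp h1
    have := ‹N.Normal›.conj_mem _ h2 (t (q * r))
    simpa [mul_assoc] using this
  let f : (G ⧸ N) → (G ⧸ N) → N := fun q r => ⟨t q * t r * (t (q * r))⁻¹, hmemf q r⟩
  have hf : ∀ q r : G ⧸ N, ((f q r : N) : G) = t q * t r * (t (q * r))⁻¹ := fun q r => rfl
  have hsec : ∀ q r : G ⧸ N, t q * t r = (f q r : G) * t (q * r) := by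
    intro q r; rw [hf]; group
  -- cocycle identity
  have hcoc : ∀ q r u : G ⧸ N, f q r * f (q * r) u = σ (t q) (f r u) * f q (r * u) := by
    intro q r u
    apply Subtype.ext
    push_cast [hσ, hf, mul_assoc q r u]
    group
  let P : (G ⧸ N) → N := fun q => ∏ r : G ⧸ N, f q r
  -- sum the cocycle identity
  have hsum : ∀ q r : G ⧸ N, f q r ^ m * P (q * r) = σ (t q) (P r) * P q := by
    intro q r
    have h1 : ∏ u : G ⧸ N, (f q r * f (q * r) u) = ∏ u : G ⧸ N, (σ (t q) (f r u) * f q (r * u)) := by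
      exact Finset.prod_congr rfl fun u _ => hcoc q r u
    rw [Finset.prod_mul_distrib, Finset.prod_mul_distrib, Finset.prod_const,
      Finset.card_univ, ← map_prod] at h1
    have h2 : ∏ u : G ⧸ N, f q (r * u) = ∏ u : G ⧸ N, f q u :=
      Equiv.prod_comp (Equiv.mulLeft r) (fun u => f q u)
    rw [h2] at h1
    exact h1
  let e : (G ⧸ N) → N := fun q => ρ (P q)
  have hkey : ∀ q r : G ⧸ N, f q r * e (q * r) = σ (t q) (e r) * e q := by
    intro q r
    have := congrArg ρ (hsum q r)
    rwa [hρ_mul, hρ_mul, hρ_pow, hρ_σ] at this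
  let s : (G ⧸ N) → G := fun q => ((e q)⁻¹ : N) * t q
  have hs_mul : ∀ q r : G ⧸ N, s (q * r) = s q * s r := by
    intro q r
    have h3 : ((e q : G))⁻¹ * t q * ((e r : G))⁻¹ * (t q)⁻¹ =
        ((e (q * r) : G))⁻¹ * ((f q r : G))⁻¹ := by
      rw [← mul_inv_rev]
      have h3c : ((f q r : G)) * ((e (q * r) : G)) =
          t q * (e r : G) * (t q)⁻¹ * (e q : G) := by
        have := congrArg (fun x : N => (x : G)) (hkey q r)
        push_cast at this
        rw [hσ] at this
        simpa [mul_assoc] using this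
      rw [h3c]
      group
    show ((e (q * r) : G))⁻¹ * t (q * r) = (((e q : G))⁻¹ * t q) * (((e r : G))⁻¹ * t r)
    have h4 : t (q * r) = ((f q r : G))⁻¹ * (t q * t r) := by
      rw [hsec q r]; group
    rw [h4, ← mul_assoc, ← h3]
    group
  have hs1 : ∀ q : G ⧸ N, ((s q : G) : G ⧸ N) = q := by
    intro q
    show QuotientGroup.mk (((e q : G))⁻¹ * t q) = q
    rw [QuotientGroup.mk_mul]
    have : (QuotientGroup.mk ((e q : G))⁻¹ : G ⧸ N) = 1 := by
      rw [QuotientGroup.eq_one_iff]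
      exact inv_mem (e q).2
    rw [this, one_mul, ht]
  let S : (G ⧸ N) →* G := MonoidHom.mk' s (fun q r => hs_mul q r)
  refine ⟨S.range, ?_, ?_⟩
  · rw [eq_bot_iff]
    rintro g ⟨⟨q, rfl⟩, hgN⟩
    have hq1 : q = 1 := by
      rw [← hs1 q]
      exact (QuotientGroup.eq_one_iff (s q)).mpr hgN
    simp [hq1, Subgroup.mem_bot, map_one S]
  · intro g
    refine ⟨g * (s (QuotientGroup.mk g))⁻¹, ?_, s (QuotientGroup.mk g), ⟨_, rfl⟩, by group⟩
    rw [← QuotientGroup.eq_one_iff, QuotientGroup.mk_mul, QuotientGroup.mk_inv,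
      hs1 (QuotientGroup.mk g), mul_inv_cancel]
end

section
/- Let G be a group with a normal abelian uniquely divisible subgroup N such that G/N is finite. Then any two complements of N in G are conjugate: if F₁, F₂ ≤ G satisfy Fᵢ ∩ N = {e} and G = NFᵢ for i = 1,2, then there exists g ∈ G (in fact g ∈ N) with F₂ = gF₁g⁻¹. -/
theorem stmt10 {G : Type*} [Group G] (N : Subgroup G) [N.Normal]
    (hab : ∀ a ∈ N, ∀ b ∈ N, a * b = b * a)
    (hdiv : ∀ n : ℕ, 0 < n → Function.Bijective (fun x : N => x ^ n))
    (hfin : Finite (G ⧸ N))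
    (F₁ F₂ : Subgroup G)
    (h1 : F₁ ⊓ N = ⊥) (h1' : ∀ g : G, ∃ n ∈ N, ∃ f ∈ F₁, g = n * f)
    (h2 : F₂ ⊓ N = ⊥) (h2' : ∀ g : G, ∃ n ∈ N, ∃ f ∈ F₂, g = n * f) :
    ∃ g ∈ N, ∀ x : G, x ∈ F₂ ↔ ∃ y ∈ F₁, x = g * y * g⁻¹ := by
  classical
  haveI hNC : IsMulCommutative N := ⟨⟨fun a b => Subtype.ext (hab a a.2 b b.2)⟩⟩
  letI : CommGroup N := { (inferInstance : Group N) with mul_comm := fun a b => Subtype.ext (hab a a.2 b b.2) }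
  have hnorm : N.Normal := inferInstance
  have conj_mem : ∀ x : G, ∀ m ∈ N, x * m * x⁻¹ ∈ N := fun x m hm => hnorm.conj_mem m hm x
  -- uniqueness of the N·F₂ decomposition
  have uniq : ∀ {p q r s : G}, p ∈ N → q ∈ N → r ∈ F₂ → s ∈ F₂ → p * r = q * s →
      p = q ∧ r = s := by
    intro p q r s hp hq hr hs h
    have e : r * s⁻¹ = p⁻¹ * q := by
      rw [mul_inv_eq_iff_eq_mul, mul_assoc, eq_inv_mul_iff_mul_eq]
      exact h
    have hmem : r * s⁻¹ ∈ F₂ ⊓ N := by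
      refine ⟨F₂.mul_mem hr (F₂.inv_mem hs), ?_⟩
      rw [e]; exact N.mul_mem (N.inv_mem hp) hq
    rw [h2, Subgroup.mem_bot] at hmem
    have hrs : r = s := by
      have := mul_inv_eq_one.mp hmem; exact this
    refine ⟨?_, hrs⟩
    subst hrs
    exact mul_right_cancel h
  choose n hn f hf hg using h2'
  -- cocycle identity
  have cocycle : ∀ x y : G, n (x * y) = n x * (x * n y * x⁻¹) := by
    intro x y
    have hfx : f x = (n x)⁻¹ * x := eq_inv_mul_iff_mul_eq.mpr (hg x).symm
    have hcomm : (n x)⁻¹ * (x * n y * x⁻¹) = (x * n y * x⁻¹) * (n x)⁻¹ :=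
      hab _ (N.inv_mem (hn x)) _ (conj_mem x _ (hn y))
    have step : f x * n y = (x * n y * x⁻¹) * f x := by
      rw [hfx]
      calc (n x)⁻¹ * x * n y = ((n x)⁻¹ * (x * n y * x⁻¹)) * x := by group
        _ = ((x * n y * x⁻¹) * (n x)⁻¹) * x := by rw [hcomm]
        _ = (x * n y * x⁻¹) * ((n x)⁻¹ * x) := by group
    have key : x * y = (n x * (x * n y * x⁻¹)) * (f x * f y) := by
      conv_lhs => rw [hg x, hg y]
      calc (n x * f x) * (n y * f y) = n x * (f x * n y) * f y := by group
        _ = n x * ((x * n y * x⁻¹) * f x) * f y := by rw [step]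
        _ = (n x * (x * n y * x⁻¹)) * (f x * f y) := by group
    exact (uniq (hn (x * y)) (N.mul_mem (hn x) (conj_mem x _ (hn y))) (hf (x * y))
      (F₂.mul_mem (hf x) (hf y)) ((hg (x * y)).symm.trans key)).1
  -- F₁ is finite
  have hF1fin : Finite F₁ := by
    have hinj : Function.Injective (fun x : F₁ => (QuotientGroup.mk (x : G) : G ⧸ N)) := by
      intro x y hxy
      have hxy' : ((x : G))⁻¹ * (y : G) ∈ N := QuotientGroup.eq.mp hxy
      have hmem : ((x : G))⁻¹ * (y : G) ∈ F₁ ⊓ N := ⟨F₁.mul_mem (F₁.inv_mem x.2) y.2, hxy'⟩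
      rw [h1, Subgroup.mem_bot] at hmem
      exact Subtype.ext (inv_mul_eq_one.mp hmem)
    exact Finite.of_injective _ hinj
  haveI : Fintype F₁ := Fintype.ofFinite _
  haveI : Nonempty F₁ := ⟨⟨1, F₁.one_mem⟩⟩
  set k : ℕ := Fintype.card F₁ with hkdef
  have hk : 0 < k := Fintype.card_pos
  set nn : F₁ → N := fun y => ⟨n ↑y, hn ↑y⟩ with hnn
  set b : N := ∏ y : F₁, nn y with hbdef
  have hb : ∀ x : F₁, b = nn x ^ k * MulAut.conjNormal (x : G) b := by
    intro x
    have e2 : ∀ y : F₁, nn (x * y) = nn x * MulAut.conjNormal (x : G) (nn y) := by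
      intro y
      apply Subtype.ext
      show n ((x : G) * (y : G)) = _
      rw [Subgroup.coe_mul, MulAut.conjNormal_apply]
      exact cocycle (x : G) (y : G)
    have e1 : b = ∏ y : F₁, nn (x * y) :=
      (Fintype.prod_equiv (Equiv.mulLeft x) (fun y => nn (x * y)) nn (fun y => rfl)).symm
    conv_lhs => rw [e1]
    simp_rw [e2]
    rw [Finset.prod_mul_distrib, Finset.prod_const, Finset.card_univ, ← hkdef]
    congr 1
    rw [hbdef]
    exact (map_prod (MulAut.conjNormal (x : G)) nn Finset.univ).symm
  obtain ⟨a, ha⟩ := (hdiv k hk).2 b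
  have ha' : a ^ k = b := ha
  have hmain : ∀ x : F₁, a = nn x * MulAut.conjNormal (x : G) a := by
    intro x
    apply (hdiv k hk).1
    show a ^ k = (nn x * MulAut.conjNormal (x : G) a) ^ k
    rw [mul_pow, ← map_pow, ha']
    exact hb x
  have hA : (a : G) ∈ N := a.2
  have hna : ∀ x : F₁, n (x : G) = (a : G) * ((x : G) * (a : G) * (x : G)⁻¹)⁻¹ := by
    intro x
    have h0 := hmain x
    rw [hnn] at h0
    have h0' := congrArg (Subtype.val : N → G) h0
    simp only [Subgroup.coe_mul, MulAut.conjNormal_apply] at h0'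
    have h1 : (a : G) = n (x : G) * ((x : G) * (a : G) * (x : G)⁻¹) := h0'
    rw [eq_mul_inv_iff_mul_eq]
    exact h1.symm
  have fmain : ∀ x : F₁, f (x : G) = (a : G)⁻¹ * (x : G) * (a : G) := by
    intro x
    have hfx : f (x : G) = (n (x : G))⁻¹ * (x : G) :=
      eq_inv_mul_iff_mul_eq.mpr (hg (x : G)).symm
    have hc' : (a : G) * ((x : G)⁻¹ * (a : G)⁻¹ * (x : G)) = ((x : G)⁻¹ * (a : G)⁻¹ * (x : G)) * (a : G) := by
      have := conj_mem (x : G)⁻¹ (a : G)⁻¹ (N.inv_mem hA)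
      rw [inv_inv] at this
      exact hab (a : G) hA _ this
    rw [hfx, hna x]
    calc ((a : G) * ((x : G) * (a : G) * (x : G)⁻¹)⁻¹)⁻¹ * (x : G)
        = (x : G) * ((a : G) * ((x : G)⁻¹ * (a : G)⁻¹ * (x : G))) := by group
      _ = (x : G) * (((x : G)⁻¹ * (a : G)⁻¹ * (x : G)) * (a : G)) := by rw [hc']
      _ = (a : G)⁻¹ * (x : G) * (a : G) := by group
  refine ⟨(a : G)⁻¹, N.inv_mem hA, fun z => ?_⟩
  constructor
  · intro hz
    obtain ⟨m, hm, y, hy, hzy⟩ := h1' z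
    refine ⟨y, hy, ?_⟩
    have hw2 : (a : G)⁻¹ * y * (a : G) ∈ F₂ := by
      have := hf y
      rw [fmain ⟨y, hy⟩] at this
      exact this
    have hzw : z⁻¹ * ((a : G)⁻¹ * y * (a : G)) ∈ N := by
      have heq : z⁻¹ * ((a : G)⁻¹ * y * (a : G)) = (y⁻¹ * (m⁻¹ * (a : G)⁻¹) * y) * (a : G) := by
        rw [hzy]; group
      rw [heq]
      refine N.mul_mem ?_ hA
      have := conj_mem y⁻¹ (m⁻¹ * (a : G)⁻¹) (N.mul_mem (N.inv_mem hm) (N.inv_mem hA))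
      rwa [inv_inv] at this
    have hmem : z⁻¹ * ((a : G)⁻¹ * y * (a : G)) ∈ F₂ ⊓ N :=
      ⟨F₂.mul_mem (F₂.inv_mem hz) hw2, hzw⟩
    rw [h2, Subgroup.mem_bot] at hmem
    have := inv_mul_eq_one.mp hmem
    rw [inv_inv]
    exact this
  · rintro ⟨y, hy, rfl⟩
    rw [inv_inv]
    have := hf y
    rw [fmain ⟨y, hy⟩] at this
    exact this
end
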